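/- Let A be the real symmetric block matrix A = [[M, E], [Eᵀ, B]], where M is symmetric of order r, B is symmetric of order n−r, and E is an r×(n−r) matrix with all entries nonnegative. Then: (i) if M is copositive, A is copositive if and only if B is copositive; (ii) if M is SPN, A is SPN if and only if B is SPN. -/

import Mathlib

open Matrix

/-- A real symmetric matrix `A` is *copositive* if `xᵀAx ≥ 0` for every
entrywise nonnegative vector `x`. -/
def Copositive {ι : Type*} [Fintype ι] (A : Matrix ι ι ℝ) : Prop :=
  ∀ x : ι → ℝ, (∀ i, 0 ≤ x i) → 0 ≤ x ⬝ᵥ A.mulVec x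

/-- A real symmetric matrix is *SPN* if it is the sum of a positive semidefinite
matrix and a symmetric entrywise nonnegative matrix. -/
def IsSPN {ι : Type*} [Fintype ι] (A : Matrix ι ι ℝ) : Prop :=
  ∃ P N : Matrix ι ι ℝ, P.PosSemidef ∧ N.IsSymm ∧ (∀ i j, 0 ≤ N i j) ∧ A = P + N

lemma quadform_fromBlocks {m n : Type*} [Fintype m] [Fintype n]
    (A : Matrix m m ℝ) (E : Matrix m n ℝ) (C : Matrix n m ℝ) (D : Matrix n n ℝ)
    (u : m → ℝ) (v : n → ℝ) :
    Sum.elim u v ⬝ᵥ (fromBlocks A E C D).mulVec (Sum.elim u v) =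
      u ⬝ᵥ A.mulVec u + u ⬝ᵥ E.mulVec v + v ⬝ᵥ C.mulVec u + v ⬝ᵥ D.mulVec v := by
  simp [dotProduct_block, fromBlocks_mulVec, dotProduct_add]
  ring

lemma dotProduct_nonneg {n : Type*} [Fintype n] {u v : n → ℝ}
    (hu : ∀ i, 0 ≤ u i) (hv : ∀ i, 0 ≤ v i) : 0 ≤ u ⬝ᵥ v :=
  Finset.sum_nonneg fun i _ => mul_nonneg (hu i) (hv i)

lemma mulVec_nonneg {m n : Type*} [Fintype n] {E : Matrix m n ℝ} {v : n → ℝ}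
    (hE : ∀ i j, 0 ≤ E i j) (hv : ∀ i, 0 ≤ v i) : ∀ i, 0 ≤ E.mulVec v i :=
  fun i => Finset.sum_nonneg fun j _ => mul_nonneg (hE i j) (hv j)

lemma posSemidef_fromBlocks_diag {m n : Type*} [Fintype m] [Fintype n]
    {P : Matrix m m ℝ} {Q : Matrix n n ℝ} (hP : P.PosSemidef) (hQ : Q.PosSemidef) :
    (fromBlocks P 0 0 Q).PosSemidef := by
  refine Matrix.PosSemidef.of_dotProduct_mulVec_nonneg ?_ ?_
  · exact IsHermitian.fromBlocks hP.1 (by simp) hQ.1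
  · intro x
    have hx : x = Sum.elim (x ∘ Sum.inl) (x ∘ Sum.inr) := (Sum.elim_comp_inl_inr x).symm
    rw [hx]
    have := quadform_fromBlocks P (0 : Matrix m n ℝ) (0 : Matrix n m ℝ) Q
      (x ∘ Sum.inl) (x ∘ Sum.inr)
    simp only [star_trivial, RCLike.re_to_real] at *
    rw [this]
    simpa using add_nonneg
      (by simpa using hP.dotProduct_mulVec_nonneg (x ∘ Sum.inl)) (by simpa using hQ.dotProduct_mulVec_nonneg (x ∘ Sum.inr))

/-- For a symmetric block matrix `A = [[M, E], [Eᵀ, B]]` with `E ≥ 0`: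
if `M` is copositive then `A` is copositive iff `B` is copositive, and
if `M` is SPN then `A` is SPN iff `B` is SPN. -/
theorem fromBlocks_copositive_and_isSPN_iff_of_nonneg_offdiag_block
    (r s : ℕ) (M : Matrix (Fin r) (Fin r) ℝ) (B : Matrix (Fin s) (Fin s) ℝ)
    (E : Matrix (Fin r) (Fin s) ℝ) (hM : M.IsSymm) (hB : B.IsSymm)
    (hE : ∀ i j, 0 ≤ E i j) :
    (Copositive M → (Copositive (Matrix.fromBlocks M E Eᵀ B) ↔ Copositive B)) ∧
    (IsSPN M → (IsSPN (Matrix.fromBlocks M E Eᵀ B) ↔ IsSPN B)) := by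
  constructor
  · intro hMc
    constructor
    · intro hA y hy
      have := hA (Sum.elim 0 y) (by rintro (i | i) <;> simp [hy])
      rw [quadform_fromBlocks] at this
      simpa using this
    · intro hBc x hx
      have hx' : x = Sum.elim (x ∘ Sum.inl) (x ∘ Sum.inr) := (Sum.elim_comp_inl_inr x).symm
      rw [hx', quadform_fromBlocks]
      have h1 := hMc _ (fun i => hx (Sum.inl i))
      have h4 := hBc _ (fun i => hx (Sum.inr i))
      have h2 : 0 ≤ (x ∘ Sum.inl) ⬝ᵥ E.mulVec (x ∘ Sum.inr) :=
        dotProduct_nonneg (fun i => hx _) (mulVec_nonneg hE fun i => hx _)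
      have h3 : 0 ≤ (x ∘ Sum.inr) ⬝ᵥ Eᵀ.mulVec (x ∘ Sum.inl) :=
        dotProduct_nonneg (fun i => hx _) (mulVec_nonneg (fun i j => hE j i) fun i => hx _)
      positivity
  · intro hMs
    constructor
    · rintro ⟨P, N, hP, hN, hNn, hA⟩
      refine ⟨P.submatrix Sum.inr Sum.inr, N.submatrix Sum.inr Sum.inr,
        hP.submatrix _, hN.submatrix _, fun i j => hNn _ _, ?_⟩
      have : B = (fromBlocks M E Eᵀ B).toBlocks₂₂ := rfl
      rw [this, hA]
      ext i j
      simp [toBlocks₂₂, Matrix.add_apply]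
    · rintro ⟨P, N, hP, hN, hNn, hBe⟩
      obtain ⟨P', N', hP', hN', hNn', hMe⟩ := hMs
      refine ⟨fromBlocks P' 0 0 P, fromBlocks N' E Eᵀ N,
        posSemidef_fromBlocks_diag hP' hP, ?_, ?_, ?_⟩
      · unfold Matrix.IsSymm
        rw [fromBlocks_transpose, hN'.eq, hN.eq, transpose_transpose]
      · rintro (i | i) (j | j)
        · exact hNn' i j
        · exact hE i j
        · exact hE j i
        · exact hNn i j
      · rw [hMe, hBe, fromBlocks_add]
        simp
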